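/- arXiv:2509.14071 — 5 statements merged into one kernel-verified Lean document; each statement's English description precedes it below -/
import Mathlib

section
/- For positive integers y and j, the alternating sum of powers satisfies: sum over x from 0 to y of (-1)^x * x^(j-1) equals (-1)^y * [y^(j-1)/2 + sum over k from 2 to j of (B_k/j) * binom(j,k) * (2^k - 1) * y^(j-k)] - (B_j/j)*(2^j - 1), where B_k are the Bernoulli numbers. -/
open Finset

section AltSumAux
open Nat PowerSeries

lemma ps_key : PowerSeries.rescale (2:ℚ) (bernoulliPowerSeries ℚ) * (PowerSeries.exp ℚ + 1)
    = (PowerSeries.C (2:ℚ)) * bernoulliPowerSeries ℚ := by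
  have hexp : PowerSeries.exp ℚ - 1 ≠ 0 := by
    intro h
    have := congrArg (PowerSeries.coeff 1) h
    simp [PowerSeries.coeff_exp] at this
  apply mul_right_cancel₀ hexp
  have h2 : PowerSeries.exp ℚ ^ 2 = PowerSeries.rescale (2:ℚ) (PowerSeries.exp ℚ) := by
    have := PowerSeries.exp_pow_eq_rescale_exp (A := ℚ) 2
    norm_num at this
    exact this
  have hX : PowerSeries.rescale (2:ℚ) (PowerSeries.X : ℚ⟦X⟧) = (PowerSeries.C (2:ℚ)) * PowerSeries.X := by
    ext n
    simp [PowerSeries.coeff_rescale, PowerSeries.coeff_X, PowerSeries.coeff_C_mul]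
  calc PowerSeries.rescale (2:ℚ) (bernoulliPowerSeries ℚ) * (PowerSeries.exp ℚ + 1) * (PowerSeries.exp ℚ - 1)
      = PowerSeries.rescale (2:ℚ) (bernoulliPowerSeries ℚ) * (PowerSeries.exp ℚ ^ 2 - 1) := by ring
    _ = PowerSeries.rescale (2:ℚ) (bernoulliPowerSeries ℚ * (PowerSeries.exp ℚ - 1)) := by
        rw [map_mul, map_sub, map_one, h2]
    _ = (PowerSeries.C (2:ℚ)) * PowerSeries.X := by rw [bernoulliPowerSeries_mul_exp_sub_one, hX]
    _ = (PowerSeries.C (2:ℚ)) * (bernoulliPowerSeries ℚ * (PowerSeries.exp ℚ - 1)) := by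
        rw [bernoulliPowerSeries_mul_exp_sub_one]
    _ = (PowerSeries.C (2:ℚ)) * bernoulliPowerSeries ℚ * (PowerSeries.exp ℚ - 1) := by ring

lemma bern_two_pow_sum (n : ℕ) :
    ∑ k ∈ range (n + 1), bernoulli k * (n.choose k : ℚ) * 2 ^ k = (2 - 2 ^ n) * bernoulli n := by
  have h := congrArg (PowerSeries.coeff n) ps_key
  rw [mul_add, mul_one, map_add, PowerSeries.coeff_C_mul, PowerSeries.coeff_rescale,
    PowerSeries.coeff_mul] at h
  have hco : ∀ m : ℕ, PowerSeries.coeff m (bernoulliPowerSeries ℚ) = bernoulli m / m ! := by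
    intro m
    simp [bernoulliPowerSeries]
  rw [Finset.Nat.sum_antidiagonal_eq_sum_range_succ_mk] at h
  simp only [PowerSeries.coeff_rescale, hco, PowerSeries.coeff_exp,
    Algebra.algebraMap_self, RingHom.id_apply, one_div] at h
  -- h : ∑ k ∈ range (n+1), 2^k * (bernoulli k / k!) * ((n-k)!)⁻¹ + 2^n * (bernoulli n / n!)
  --     = 2 * (bernoulli n / n!)
  have hfac : ∀ m : ℕ, (m ! : ℚ) ≠ 0 := fun m => by exact_mod_cast (Nat.factorial_ne_zero m)
  have key : ∑ k ∈ range (n + 1), bernoulli k * (n.choose k : ℚ) * 2 ^ k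
      = (∑ k ∈ range (n + 1), 2 ^ k * (bernoulli k / k !) * (((n - k)! : ℚ))⁻¹) * n ! := by
    rw [Finset.sum_mul]
    refine Finset.sum_congr rfl fun k hk => ?_
    have hkn : k ≤ n := Nat.lt_succ_iff.mp (Finset.mem_range.mp hk)
    have hch : ((n.choose k : ℚ)) * k ! * (n - k)! = n ! := by
      exact_mod_cast congrArg (Nat.cast : ℕ → ℚ) (Nat.choose_mul_factorial_mul_factorial hkn)
    field_simp
    linear_combination (bernoulli k) * hch
  simp only [Nat.succ_eq_add_one] at h
  rw [key, eq_sub_of_add_eq h]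
  field_simp

lemma bern_eval (n : ℕ) (x : ℚ) : (Polynomial.bernoulli n).eval x
    = ∑ i ∈ range (n + 1), bernoulli i * (n.choose i : ℚ) * x ^ (n - i) := by
  simp [Polynomial.bernoulli, Polynomial.eval_finset_sum]

lemma bern_eval_half (n : ℕ) :
    (Polynomial.bernoulli n).eval (1/2 : ℚ) = (2 - 2 ^ n) * bernoulli n / 2 ^ n := by
  rw [bern_eval]
  have : ∑ i ∈ range (n + 1), bernoulli i * (n.choose i : ℚ) * (1/2 : ℚ) ^ (n - i)
      = (∑ i ∈ range (n + 1), bernoulli i * (n.choose i : ℚ) * 2 ^ i) / 2 ^ n := by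
    rw [Finset.sum_div]
    refine Finset.sum_congr rfl fun i hi => ?_
    have hin : i ≤ n := Nat.lt_succ_iff.mp (Finset.mem_range.mp hi)
    have h2 : (2:ℚ) ^ n = 2 ^ i * 2 ^ (n - i) := by
      rw [← pow_add]
      congr 1
      omega
    rw [div_pow, one_pow, h2]
    have h2i : (2:ℚ) ^ (n-i) ≠ 0 := by positivity
    have h2n : (2:ℚ) ^ i ≠ 0 := by positivity
    field_simp
  rw [this, bern_two_pow_sum]

lemma bern_dup (j : ℕ) (hj : 0 < j) (n : ℕ) :
    2 ^ (j-1) * ((Polynomial.bernoulli j).eval ((n:ℚ)/2)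
      + (Polynomial.bernoulli j).eval (((n:ℚ)+1)/2))
    = (Polynomial.bernoulli j).eval (n:ℚ) := by
  induction n with
  | zero =>
    simp only [Nat.cast_zero, zero_div, zero_add, Polynomial.bernoulli_eval_zero]
    rw [show ((1:ℚ)/2) = 1/2 from rfl, bern_eval_half]
    have h2 : (2:ℚ) ^ j = 2 * 2 ^ (j-1) := by
      conv_lhs => rw [show j = (j-1)+1 by omega]
      rw [pow_succ]
      ring
    have h2j : (2:ℚ) ^ j ≠ 0 := by positivity
    rw [h2]
    field_simp
    ring
  | succ n ih =>
    have e1 : ((n:ℚ)+1+1)/2 = 1 + (n:ℚ)/2 := by ring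
    have e2 : ((n:ℚ)+1) = 1 + (n:ℚ) := by ring
    push_cast
    rw [e1, e2, Polynomial.bernoulli_eval_one_add, Polynomial.bernoulli_eval_one_add, ← e2]
    have h2 : (2:ℚ) ^ (j-1) * ((n:ℚ)/2) ^ (j-1) = (n:ℚ) ^ (j-1) := by
      rw [div_pow, mul_div_assoc']
      rw [mul_comm]
      rw [mul_div_assoc]
      simp
    nlinarith [ih, h2]

lemma bracket (j : ℕ) (hj : 0 < j) (y : ℚ) :
    (j:ℚ) * (y ^ (j-1) / 2 +
        ∑ k ∈ Icc 2 j, (bernoulli k / j) * (j.choose k : ℚ) * (2 ^ k - 1) * y ^ (j - k))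
      = 2 ^ j * (Polynomial.bernoulli j).eval (y/2)
        - (Polynomial.bernoulli j).eval y + j * y ^ (j-1) := by
  have hj0 : (j:ℚ) ≠ 0 := Nat.cast_ne_zero.mpr hj.ne'
  rw [bern_eval, bern_eval]
  have h1 : (2:ℚ) ^ j * ∑ i ∈ range (j+1), bernoulli i * (j.choose i : ℚ) * (y/2) ^ (j-i)
      = ∑ i ∈ range (j+1), bernoulli i * (j.choose i : ℚ) * 2 ^ i * y ^ (j-i) := by
    rw [Finset.mul_sum]
    refine Finset.sum_congr rfl fun i hi => ?_
    have hin : i ≤ j := Nat.lt_succ_iff.mp (Finset.mem_range.mp hi)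
    have hsplit : (2:ℚ) ^ j = 2 ^ i * 2 ^ (j-i) := by rw [← pow_add]; congr 1; omega
    have hne : ((2:ℚ)) ^ (j-i) ≠ 0 := by positivity
    rw [div_pow, hsplit]
    field_simp
  rw [h1]
  have h2 : ∑ i ∈ range (j+1), bernoulli i * (j.choose i : ℚ) * 2 ^ i * y ^ (j-i)
      - ∑ i ∈ range (j+1), bernoulli i * (j.choose i : ℚ) * y ^ (j-i)
      = ∑ i ∈ range (j+1), bernoulli i * (j.choose i : ℚ) * (2 ^ i - 1) * y ^ (j-i) := by
    rw [← Finset.sum_sub_distrib]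
    exact Finset.sum_congr rfl fun i _ => by ring
  rw [sub_add_eq_add_sub, add_sub_right_comm, h2]
  have h3 : ∑ i ∈ range (j+1), bernoulli i * (j.choose i : ℚ) * (2 ^ i - 1) * y ^ (j-i)
      = (∑ k ∈ Icc 2 j, bernoulli k * (j.choose k : ℚ) * (2 ^ k - 1) * y ^ (j-k))
        - (j:ℚ)/2 * y ^ (j-1) := by
    obtain ⟨m, rfl⟩ : ∃ m, j = m + 1 := ⟨j - 1, by omega⟩
    rw [Finset.sum_range_succ', Finset.sum_range_succ', ← Finset.Ico_add_one_right_eq_Icc, Finset.sum_Ico_eq_sum_range]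
    simp only [Nat.add_sub_cancel]
    have hrw : ∀ i ∈ range (m + 1 + 1 - 2), bernoulli (2+i) * ((m+1).choose (2+i) : ℚ)
        * (2 ^ (2+i) - 1) * y ^ (m+1-(2+i))
        = bernoulli (i+1+1) * ((m+1).choose (i+1+1) : ℚ) * (2 ^ (i+1+1) - 1) * y ^ (m+1-(i+1+1)) := by
      intro i _
      rw [show 2 + i = i + 1 + 1 by omega]
    rw [Finset.sum_congr (by rw [show m + 1 + 1 - 2 = m by omega]) hrw]
    simp [Nat.choose_one_right]
    ring
  rw [h3]
  rw [mul_add, Finset.mul_sum]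
  have h4 : ∀ k ∈ Icc 2 j, (j:ℚ) * ((bernoulli k / j) * (j.choose k : ℚ) * (2 ^ k - 1) * y ^ (j-k))
      = bernoulli k * (j.choose k : ℚ) * (2 ^ k - 1) * y ^ (j-k) := by
    intro k _
    field_simp
  rw [Finset.sum_congr rfl h4]
  ring

lemma bracket_step (j : ℕ) (hj : 0 < j) (n : ℕ) :
    (2 ^ j * (Polynomial.bernoulli j).eval ((n:ℚ)/2) - (Polynomial.bernoulli j).eval (n:ℚ)
      + j * (n:ℚ) ^ (j-1))
    + (2 ^ j * (Polynomial.bernoulli j).eval (((n:ℚ)+1)/2)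
      - (Polynomial.bernoulli j).eval ((n:ℚ)+1) + j * ((n:ℚ)+1) ^ (j-1))
    = (j:ℚ) * ((n:ℚ)+1) ^ (j-1) := by
  have hd := bern_dup j hj n
  have he : (Polynomial.bernoulli j).eval ((n:ℚ)+1)
      = (Polynomial.bernoulli j).eval (n:ℚ) + j * (n:ℚ) ^ (j-1) := by
    rw [show ((n:ℚ)+1) = 1 + (n:ℚ) by ring, Polynomial.bernoulli_eval_one_add]
  have h2 : (2:ℚ) ^ j = 2 * 2 ^ (j-1) := by
    conv_lhs => rw [show j = (j-1)+1 by omega]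
    rw [pow_succ]
    ring
  rw [h2]
  linear_combination 2 * hd - he

end AltSumAux

/-- Alternating sum of powers: for positive integers `y` and `j`,
`∑_{x=0}^{y} (-1)^x x^{j-1} = (-1)^y [y^{j-1}/2 + ∑_{k=2}^{j} (B_k/j) C(j,k)(2^k-1) y^{j-k}]
  - (B_j/j)(2^j-1)`. -/
theorem alt_sum_powers (y j : ℕ) (hy : 0 < y) (hj : 0 < j) :
    ∑ x ∈ range (y + 1), (-1 : ℚ) ^ x * (x : ℚ) ^ (j - 1) =
      (-1 : ℚ) ^ y * ((y : ℚ) ^ (j - 1) / 2 +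
        ∑ k ∈ Icc 2 j, (bernoulli k / j) * (j.choose k) * (2 ^ k - 1) * (y : ℚ) ^ (j - k))
      - (bernoulli j / j) * (2 ^ j - 1) := by
  clear hy
  have hj0 : (j:ℚ) ≠ 0 := Nat.cast_ne_zero.mpr hj.ne'
  induction y with
  | zero =>
    have hb := bracket j hj 0
    rw [zero_div, Polynomial.bernoulli_eval_zero] at hb
    simp only [Finset.sum_range_one, pow_zero, one_mul, Nat.cast_zero]
    apply mul_left_cancel₀ hj0
    rw [mul_sub, hb]
    field_simp
    simp
  | succ z ih =>
    rw [Finset.sum_range_succ, ih]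
    have hb1 := bracket j hj z
    have hb2 := bracket j hj ((z:ℚ)+1)
    have hstep := bracket_step j hj z
    push_cast
    apply mul_left_cancel₀ hj0
    linear_combination ((-1:ℚ))^z * hb1 + ((-1:ℚ))^z * hb2 + ((-1:ℚ))^z * hstep
end

section
/- For the Krawtchouk-type weight: if p = λ/(1+λ) and q = 1/(1+λ) for λ > 0, the sum over all interlaced sequences 0 ≤ x_1 < x_2 < ... < x_m ≤ n of λ^(sum x_i - m(m-1)/2) / (1+λ)^(m(n+1-m)) times [Vandermonde(x)]^2 / prod_i (x_i!(n-x_i)!) times prod_{i=0}^{m-1} (n-i)!/i! equals 1, i.e., the single-level particle distribution is a probability distribution. -/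
open Finset Matrix Equiv Polynomial



section CauchyBinet
variable {R : Type*} [CommRing R] {m N : ℕ}

lemma cb_expand (A : Matrix (Fin m) (Fin N) R) (B : Matrix (Fin N) (Fin m) R) :
    det (A * B) = ∑ p : Fin m → Fin N, (∏ i, B (p i) i) * det (A.submatrix id p) :=
  calc
    det (A * B) = ∑ p : Fin m → Fin N, ∑ σ : Perm (Fin m),
        (Perm.sign σ : ℤ) * ∏ i, A (σ i) (p i) * B (p i) i := by
      simp only [det_apply', mul_apply, prod_univ_sum, mul_sum, Fintype.piFinset_univ]
      rw [Finset.sum_comm]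
    _ = _ := by
      refine Finset.sum_congr rfl fun p _ => ?_
      rw [det_apply', Finset.mul_sum]
      refine Finset.sum_congr rfl fun σ _ => ?_
      rw [prod_mul_distrib]
      simp [Matrix.submatrix_apply]
      ring

lemma cb_sum_inj (F : (Fin m → Fin N) → R) :
    ∑ p ∈ univ.filter (fun p : Fin m → Fin N => Function.Injective p), F p
    = ∑ gσ ∈ (univ.filter (fun g : Fin m → Fin N => StrictMono g)) ×ˢ
        (univ : Finset (Perm (Fin m))), F (gσ.1 ∘ gσ.2) := by
  refine Finset.sum_nbij' (i := fun p => (p ∘ Tuple.sort p, (Tuple.sort p)⁻¹))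
    (j := fun gσ => gσ.1 ∘ gσ.2) ?_ ?_ ?_ ?_ ?_
  · intro p hp
    simp only [mem_filter, mem_univ, true_and] at hp ⊢
    rw [Finset.mem_product]
    refine ⟨?_, Finset.mem_univ _⟩
    simp only [mem_filter, mem_univ, true_and]
    exact (Tuple.monotone_sort p).strictMono_of_injective
      (hp.comp (Equiv.injective _))
  · intro gσ hgσ
    rw [Finset.mem_product] at hgσ
    simp only [mem_filter, mem_univ, true_and] at hgσ ⊢
    exact hgσ.1.injective.comp (Equiv.injective _)
  · intro p hp
    funext x
    simp [Function.comp, Perm.inv_def]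
  · intro gσ hgσ
    rw [Finset.mem_product] at hgσ
    simp only [mem_filter, mem_univ, true_and] at hgσ
    obtain ⟨g, σ⟩ := gσ
    have hg : StrictMono g := hgσ.1
    have hinj : Function.Injective (g ∘ σ) := hg.injective.comp (Equiv.injective _)
    have hmono1 : Monotone ((g ∘ σ) ∘ (σ⁻¹ : Perm (Fin m))) := by
      have : (g ∘ σ) ∘ (σ⁻¹ : Perm (Fin m)) = g := by
        funext x; simp [Function.comp, Perm.inv_def]
      rw [this]; exact hg.monotone
    have hmono2 : Monotone ((g ∘ σ) ∘ Tuple.sort (g ∘ σ)) := Tuple.monotone_sort _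
    have hcomp : (g ∘ σ) ∘ (σ⁻¹ : Perm (Fin m)) = (g ∘ σ) ∘ Tuple.sort (g ∘ σ) :=
      Tuple.unique_monotone hmono1 hmono2
    have hperm : (σ⁻¹ : Perm (Fin m)) = Tuple.sort (g ∘ σ) := by
      ext x
      exact congrArg Fin.val (hinj (congrFun hcomp x))
    have h1 : (g ∘ σ) ∘ Tuple.sort (g ∘ σ) = g := by
      rw [← hperm]
      funext x; simp [Function.comp, Perm.inv_def]
    have h2 : (Tuple.sort (g ∘ σ))⁻¹ = σ := by rw [← hperm]; simp
    simp only [Prod.mk.injEq]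
    exact ⟨h1, h2⟩
  · intro p hp
    congr 1
    funext x
    simp [Function.comp, Perm.inv_def]

theorem det_mul_cauchyBinet (A : Matrix (Fin m) (Fin N) R) (B : Matrix (Fin N) (Fin m) R) :
    det (A * B) = ∑ g ∈ univ.filter (fun g : Fin m → Fin N => StrictMono g),
      det (A.submatrix id g) * det (B.submatrix g id) := by
  rw [cb_expand]
  have h1 : ∑ p : Fin m → Fin N, (∏ i, B (p i) i) * det (A.submatrix id p)
      = ∑ p ∈ univ.filter (fun p : Fin m → Fin N => Function.Injective p),
        (∏ i, B (p i) i) * det (A.submatrix id p) := by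
    refine (Finset.sum_subset (Finset.filter_subset _ _) fun p _ hp => ?_).symm
    simp only [mem_filter, mem_univ, true_and] at hp
    rw [Function.Injective] at hp
    push_neg at hp
    obtain ⟨a, b, hab, hne⟩ := hp
    rw [Matrix.det_zero_of_column_eq hne (fun k => by simp [hab]), mul_zero]
  rw [h1, cb_sum_inj, Finset.sum_product]
  refine Finset.sum_congr rfl fun g hg => ?_
  simp only [mem_filter, mem_univ, true_and] at hg
  calc ∑ σ : Perm (Fin m), (∏ i, B (g (σ i)) i) * det (A.submatrix id (g ∘ σ))
      = ∑ σ : Perm (Fin m), ((Perm.sign σ : ℤ) : R) *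
          (∏ i, (B.submatrix g id) (σ i) i) * det (A.submatrix id g) := by
        refine Finset.sum_congr rfl fun σ _ => ?_
        have : A.submatrix id (g ∘ σ) = (A.submatrix id g).submatrix id σ := by
          rw [Matrix.submatrix_submatrix]; rfl
        rw [this, Matrix.det_permute']
        simp only [Matrix.submatrix_apply, id_eq]
        ring
    _ = det (A.submatrix id g) * det (B.submatrix g id) := by
        rw [det_apply' (B.submatrix g id), Finset.mul_sum]
        refine Finset.sum_congr rfl fun σ _ => ?_
        ring

end CauchyBinet


variable {m n : ℕ}

-- Vandermonde determinant of the descFactorial matrix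
lemma det_descFactorial (v : Fin m → ℕ) :
    det (Matrix.of fun i j : Fin m => (Nat.descFactorial (v i) (j : ℕ) : ℝ)) =
      ∏ i : Fin m, ∏ j ∈ Ioi i, ((v j : ℝ) - (v i : ℝ)) := by
  have h := Matrix.det_eval_matrixOfPolynomials_eq_det_vandermonde
    (fun i : Fin m => ((v i : ℝ))) (fun i => descPochhammer ℝ i)
    (fun i => descPochhammer_natDegree ℝ i) (fun i => monic_descPochhammer ℝ i)
  have h2 : (Matrix.of fun i j : Fin m => (Nat.descFactorial (v i) (j : ℕ) : ℝ)) =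
      Matrix.of fun i j : Fin m => (descPochhammer ℝ (j : ℕ)).eval ((v i : ℝ)) := by
    ext i j
    simp [descPochhammer_eval_eq_descFactorial]
  rw [h2, ← h, Matrix.det_vandermonde]

-- swap the nested products
lemma prod_Iio_eq_prod_Ioi (f : Fin m → Fin m → ℝ) :
    ∏ j : Fin m, ∏ i ∈ Iio j, f i j = ∏ i : Fin m, ∏ j ∈ Ioi i, f i j := by
  exact Finset.prod_comm' (fun j i => by simp [mem_Iio, mem_Ioi, and_comm])

lemma prod_Iio_sub_eq_factorial (j : Fin m) :
    ∏ i ∈ Iio j, (((j : ℕ) : ℝ) - ((i : ℕ) : ℝ)) = ((j : ℕ).factorial : ℝ) := by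
  have h1 : ∏ i ∈ Iio j, (((j : ℕ) : ℝ) - ((i : ℕ) : ℝ))
      = ∏ a ∈ range (j : ℕ), (((j : ℕ) : ℝ) - (a : ℝ)) := by
    refine Finset.prod_bij' (fun i _ => (i : ℕ)) (fun a ha => ⟨a, lt_trans (mem_range.1 ha) j.2⟩)
      ?_ ?_ ?_ ?_ ?_
    · intro i hi; simpa [mem_range] using (mem_Iio.1 hi)
    · intro a ha; simp [mem_Iio, Fin.lt_iff_val_lt_val]; exact mem_range.1 ha
    · intro i hi; rfl
    · intro a ha; rfl
    · intro i hi; rfl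
  rw [h1]
  have h2 : ∀ a ∈ range (j : ℕ), (((j : ℕ) : ℝ) - (a : ℝ)) = (((j : ℕ) - a : ℕ) : ℝ) := by
    intro a ha
    rw [Nat.cast_sub (le_of_lt (mem_range.1 ha))]
  rw [Finset.prod_congr rfl h2, ← Nat.cast_prod]
  congr 1
  rw [← Finset.prod_range_reflect]
  rw [← Finset.prod_range_add_one_eq_factorial]
  refine Finset.prod_congr rfl fun a ha => ?_
  have := mem_range.1 ha
  omega

lemma entry_sum (n : ℕ) (lam : ℝ) (i j : ℕ) (hi : i ≤ n) :
    ∑ x : Fin (n + 1), (lam ^ (x : ℕ) * (Nat.descFactorial (x : ℕ) i : ℝ) /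
        (Nat.factorial (x : ℕ) : ℝ)) *
      ((Nat.descFactorial (n - (x : ℕ)) j : ℝ) / (Nat.factorial (n - (x : ℕ)) : ℝ))
    = lam ^ i * (Nat.descFactorial (n - i) j : ℝ) * (1 + lam) ^ (n - i - j) /
        (Nat.factorial (n - i) : ℝ) := by
  have hsum : ∑ x : Fin (n + 1), (lam ^ (x : ℕ) * (Nat.descFactorial (x : ℕ) i : ℝ) /
        (Nat.factorial (x : ℕ) : ℝ)) *
      ((Nat.descFactorial (n - (x : ℕ)) j : ℝ) / (Nat.factorial (n - (x : ℕ)) : ℝ))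
      = ∑ x ∈ range (n + 1), (lam ^ x * (Nat.descFactorial x i : ℝ) /
        (Nat.factorial x : ℝ)) *
      ((Nat.descFactorial (n - x) j : ℝ) / (Nat.factorial (n - x) : ℝ)) :=
    Fin.sum_univ_eq_sum_range (fun x => (lam ^ x * (Nat.descFactorial x i : ℝ) /
        (Nat.factorial x : ℝ)) *
      ((Nat.descFactorial (n - x) j : ℝ) / (Nat.factorial (n - x) : ℝ))) (n + 1)
  rw [hsum]
  by_cases hij : i + j ≤ n
  · set k := n - i - j with hk
    have hkn : i + j + k = n := by omega
    -- restrict the sum to [i, i+k]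
    have hsub : Finset.Ico i (i + k + 1) ⊆ range (n + 1) := by
      intro x hx
      rw [Finset.mem_Ico] at hx
      rw [mem_range]
      omega
    have hzero : ∀ x ∈ range (n + 1), x ∉ Finset.Ico i (i + k + 1) →
        (lam ^ x * (Nat.descFactorial x i : ℝ) / (Nat.factorial x : ℝ)) *
          ((Nat.descFactorial (n - x) j : ℝ) / (Nat.factorial (n - x) : ℝ)) = 0 := by
      intro x hxr hx
      rw [mem_range] at hxr
      rw [Finset.mem_Ico] at hx
      push_neg at hx
      by_cases hxi : x < i
      · rw [Nat.descFactorial_eq_zero_iff_lt.2 hxi]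
        simp
      · have : n - x < j := by omega
        rw [Nat.descFactorial_eq_zero_iff_lt.2 this]
        simp
    rw [← Finset.sum_subset hsub hzero, Finset.sum_Ico_eq_sum_range]
    have hterm : ∀ y ∈ range (i + k + 1 - i),
        (lam ^ (i + y) * (Nat.descFactorial (i + y) i : ℝ) / (Nat.factorial (i + y) : ℝ)) *
          ((Nat.descFactorial (n - (i + y)) j : ℝ) / (Nat.factorial (n - (i + y)) : ℝ))
        = lam ^ i * (lam ^ y * (Nat.choose k y : ℝ)) / (Nat.factorial k : ℝ) := by
      intro y hy
      have hyk : y ≤ k := by rw [mem_range] at hy; omega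
      have h1 : Nat.factorial y * Nat.descFactorial (i + y) i = Nat.factorial (i + y) := by
        have := Nat.factorial_mul_descFactorial (n := i + y) (k := i) (by omega)
        simpa [show i + y - i = y by omega] using this
      have hnx : n - (i + y) = k - y + j := by omega
      have h2 : Nat.factorial (k - y) * Nat.descFactorial (k - y + j) j
          = Nat.factorial (k - y + j) := by
        have := Nat.factorial_mul_descFactorial (n := k - y + j) (k := j) (by omega)
        simpa [show k - y + j - j = k - y by omega] using this
      have h3 : Nat.choose k y * Nat.factorial y * Nat.factorial (k - y) = Nat.factorial k :=
        Nat.choose_mul_factorial_mul_factorial hyk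
      rw [hnx]
      have key : (Nat.descFactorial (i + y) i : ℝ) * (Nat.descFactorial (k - y + j) j : ℝ) *
          (Nat.factorial k : ℝ) = (Nat.choose k y : ℝ) *
            ((Nat.factorial (i + y) : ℝ) * (Nat.factorial (k - y + j) : ℝ)) := by
        push_cast [← h1, ← h2, ← h3]
        ring
      have hf1 : (Nat.factorial (i + y) : ℝ) ≠ 0 := Nat.cast_ne_zero.2 (Nat.factorial_ne_zero _)
      have hf2 : (Nat.factorial (k - y + j) : ℝ) ≠ 0 := Nat.cast_ne_zero.2 (Nat.factorial_ne_zero _)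
      have hfk : (Nat.factorial k : ℝ) ≠ 0 := Nat.cast_ne_zero.2 (Nat.factorial_ne_zero _)
      field_simp
      linear_combination (lam ^ i * lam ^ y) * key
    rw [Finset.sum_congr rfl hterm]
    have hrange : i + k + 1 - i = k + 1 := by omega
    rw [hrange]
    have hknk : n - i = k + j := by omega
    have hkk : n - i - j = k := by omega
    rw [hknk]
    have hdf : Nat.factorial k * Nat.descFactorial (k + j) j = Nat.factorial (k + j) := by
      have := Nat.factorial_mul_descFactorial (n := k + j) (k := j) (by omega)
      simpa [show k + j - j = k by omega] using this
    have hpow : (lam + 1) ^ k = ∑ y ∈ range (k + 1), lam ^ y * (Nat.choose k y : ℝ) := by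
      rw [add_pow]
      refine Finset.sum_congr rfl fun y _ => ?_
      rw [one_pow, mul_one]
    have hfk : (Nat.factorial k : ℝ) ≠ 0 := Nat.cast_ne_zero.2 (Nat.factorial_ne_zero _)
    have hfkj : (Nat.factorial (k + j) : ℝ) ≠ 0 := Nat.cast_ne_zero.2 (Nat.factorial_ne_zero _)
    have hsum2 : ∑ y ∈ range (k + 1), lam ^ i * (lam ^ y * (Nat.choose k y : ℝ)) /
        (Nat.factorial k : ℝ) = lam ^ i * (lam + 1) ^ k / (Nat.factorial k : ℝ) := by
      rw [hpow, Finset.mul_sum, Finset.sum_div]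
    rw [hsum2]
    have hdfr : (Nat.descFactorial (k + j) j : ℝ) * (Nat.factorial k : ℝ)
        = (Nat.factorial (k + j) : ℝ) := by
      push_cast [← hdf]; ring
    rw [div_eq_div_iff hfk hfkj]
    linear_combination (-(lam ^ i) * (1 + lam) ^ k) * hdfr
  · -- i + j > n : both sides vanish
    have hrhs : Nat.descFactorial (n - i) j = 0 :=
      Nat.descFactorial_eq_zero_iff_lt.2 (by omega)
    rw [hrhs]
    rw [Finset.sum_eq_zero]
    · simp
    intro x hx
    rw [mem_range] at hx
    by_cases hxi : x < i
    · rw [Nat.descFactorial_eq_zero_iff_lt.2 hxi]; simp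
    · have : n - x < j := by omega
      rw [Nat.descFactorial_eq_zero_iff_lt.2 this]; simp

lemma detA (lam : ℝ) (g : Fin m → Fin (n + 1)) :
    det ((Matrix.of fun (i : Fin m) (x : Fin (n + 1)) =>
        lam ^ (x : ℕ) * (Nat.descFactorial (x : ℕ) (i : ℕ) : ℝ) /
          (Nat.factorial (x : ℕ) : ℝ)).submatrix id g)
    = (∏ j : Fin m, lam ^ ((g j : ℕ)) / (Nat.factorial (g j : ℕ) : ℝ)) *
        ∏ i : Fin m, ∏ j ∈ Ioi i, (((g j : ℕ) : ℝ) - ((g i : ℕ) : ℝ)) := by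
  have h : ((Matrix.of fun (i : Fin m) (x : Fin (n + 1)) =>
        lam ^ (x : ℕ) * (Nat.descFactorial (x : ℕ) (i : ℕ) : ℝ) /
          (Nat.factorial (x : ℕ) : ℝ)).submatrix id g)
      = Matrix.of (fun i j : Fin m =>
        (fun j' : Fin m => lam ^ ((g j' : ℕ)) / (Nat.factorial (g j' : ℕ) : ℝ)) j *
          (Matrix.of fun i' j' : Fin m =>
            (Nat.descFactorial ((g j' : ℕ)) (i' : ℕ) : ℝ)) i j) := by
    ext i j
    simp only [Matrix.submatrix_apply, Matrix.of_apply, id_eq]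
    ring
  rw [h, Matrix.det_mul_row]
  congr 1
  have h2 : (Matrix.of fun i' j' : Fin m => (Nat.descFactorial ((g j' : ℕ)) (i' : ℕ) : ℝ))
      = (Matrix.of fun i' j' : Fin m => (Nat.descFactorial ((g i' : ℕ)) (j' : ℕ) : ℝ))ᵀ := by
    ext i j
    rfl
  rw [h2, Matrix.det_transpose, det_descFactorial]

lemma detB (g : Fin m → Fin (n + 1)) :
    det ((Matrix.of fun (x : Fin (n + 1)) (j : Fin m) =>
        (Nat.descFactorial (n - (x : ℕ)) (j : ℕ) : ℝ) /
          (Nat.factorial (n - (x : ℕ)) : ℝ)).submatrix g id)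
    = (∏ i : Fin m, ((Nat.factorial (n - (g i : ℕ)) : ℝ))⁻¹) *
        ∏ i : Fin m, ∏ j ∈ Ioi i, (((n - (g j : ℕ) : ℕ) : ℝ) - ((n - (g i : ℕ) : ℕ) : ℝ)) := by
  have h : ((Matrix.of fun (x : Fin (n + 1)) (j : Fin m) =>
        (Nat.descFactorial (n - (x : ℕ)) (j : ℕ) : ℝ) /
          (Nat.factorial (n - (x : ℕ)) : ℝ)).submatrix g id)
      = Matrix.of (fun i j : Fin m =>
        (fun i' : Fin m => ((Nat.factorial (n - (g i' : ℕ)) : ℝ))⁻¹) i *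
          (Matrix.of fun i' j' : Fin m =>
            (Nat.descFactorial (n - (g i' : ℕ)) (j' : ℕ) : ℝ)) i j) := by
    ext i j
    simp only [Matrix.submatrix_apply, Matrix.of_apply, id_eq]
    ring
  rw [h, Matrix.det_mul_column]
  congr 1
  exact det_descFactorial (fun i => n - (g i : ℕ))

lemma detAB (lam : ℝ) (hlam : 0 < lam) (hmn : m ≤ n) :
    det ((Matrix.of fun (i : Fin m) (x : Fin (n + 1)) =>
        lam ^ (x : ℕ) * (Nat.descFactorial (x : ℕ) (i : ℕ) : ℝ) /
          (Nat.factorial (x : ℕ) : ℝ)) *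
      (Matrix.of fun (x : Fin (n + 1)) (j : Fin m) =>
        (Nat.descFactorial (n - (x : ℕ)) (j : ℕ) : ℝ) /
          (Nat.factorial (n - (x : ℕ)) : ℝ)))
    = (∏ i : Fin m, lam ^ (i : ℕ) / (Nat.factorial (n - (i : ℕ)) : ℝ)) *
        ((∏ i : Fin m, (1 + lam) ^ (n - (i : ℕ))) *
          ((∏ j : Fin m, ((1 + lam) ^ (j : ℕ))⁻¹) *
            ∏ i : Fin m, ∏ j ∈ Ioi i, (((n - (j : ℕ) : ℕ) : ℝ) - ((n - (i : ℕ) : ℕ) : ℝ)))) := by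
  have ht : (0 : ℝ) < 1 + lam := by linarith
  have hABentry : (Matrix.of fun (i : Fin m) (x : Fin (n + 1)) =>
        lam ^ (x : ℕ) * (Nat.descFactorial (x : ℕ) (i : ℕ) : ℝ) /
          (Nat.factorial (x : ℕ) : ℝ)) *
      (Matrix.of fun (x : Fin (n + 1)) (j : Fin m) =>
        (Nat.descFactorial (n - (x : ℕ)) (j : ℕ) : ℝ) /
          (Nat.factorial (n - (x : ℕ)) : ℝ))
      = Matrix.of (fun i j : Fin m =>
          (fun i' : Fin m => lam ^ (i' : ℕ) / (Nat.factorial (n - (i' : ℕ)) : ℝ)) i *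
          (Matrix.of (fun i' j' : Fin m =>
            (Nat.descFactorial (n - (i' : ℕ)) (j' : ℕ) : ℝ) *
              (1 + lam) ^ (n - (i' : ℕ) - (j' : ℕ)))) i j) := by
    ext i j
    rw [Matrix.mul_apply]
    simp only [Matrix.of_apply]
    rw [entry_sum n lam (i : ℕ) (j : ℕ) (le_trans (Nat.le_of_lt_succ (Nat.lt_succ_of_lt i.2)) hmn)]
    ring
  rw [hABentry, Matrix.det_mul_column]
  congr 1
  have hentry2 : (Matrix.of (fun i' j' : Fin m =>
        (Nat.descFactorial (n - (i' : ℕ)) (j' : ℕ) : ℝ) *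
          (1 + lam) ^ (n - (i' : ℕ) - (j' : ℕ))))
      = Matrix.of (fun i j : Fin m =>
          (fun i' : Fin m => (1 + lam) ^ (n - (i' : ℕ))) i *
          (Matrix.of (fun i' j' : Fin m =>
            (fun j'' : Fin m => ((1 + lam) ^ (j'' : ℕ))⁻¹) j' *
            (Matrix.of (fun a b : Fin m =>
              (Nat.descFactorial (n - (a : ℕ)) (b : ℕ) : ℝ))) i' j')) i j) := by
    ext i j
    simp only [Matrix.of_apply]
    by_cases hji : (j : ℕ) ≤ n - (i : ℕ)
    · rw [pow_sub₀ (1 + lam) (ne_of_gt ht) hji]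
      ring
    · rw [Nat.descFactorial_eq_zero_iff_lt.2 (by omega)]
      simp
  rw [hentry2, Matrix.det_mul_column]
  congr 1
  rw [Matrix.det_mul_row]
  congr 1
  exact det_descFactorial (fun i => n - (i : ℕ))

/-- Normalization of the single-level (Krawtchouk-type) particle distribution: the sum over all
strictly increasing `m`-tuples `0 ≤ x_1 < ⋯ < x_m ≤ n` of
`λ^{∑ x_i - m(m-1)/2}/(1+λ)^{m(n+1-m)} · Δ(x)² / ∏ x_i!(n-x_i)! · ∏_{i=0}^{m-1} (n-i)!/i!`
equals `1`. -/
theorem krawtchouk_normalization (n m : ℕ) (hm : 1 ≤ m) (hmn : m ≤ n)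
    (lam : ℝ) (hlam : 0 < lam) :
    ∑ x ∈ Finset.univ.filter (fun x : Fin m → Fin (n + 1) =>
        ∀ i j : Fin m, i < j → x i < x j),
      (lam ^ (∑ i, (x i : ℕ)) / lam ^ (m * (m - 1) / 2)) / (1 + lam) ^ (m * (n + 1 - m)) *
        ((∏ j : Fin m, ∏ i ∈ Finset.Iio j, ((x j : ℕ) - (x i : ℕ) : ℝ)) ^ 2 /
          ∏ i : Fin m, ((Nat.factorial (x i) : ℝ) * (Nat.factorial (n - (x i : ℕ)) : ℝ))) *
        ∏ i ∈ Finset.range m, ((Nat.factorial (n - i) : ℝ) / (Nat.factorial i : ℝ)) = 1 := by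
  classical
  have ht : (0 : ℝ) < 1 + lam := by linarith
  have htne : (1 + lam : ℝ) ≠ 0 := ne_of_gt ht
  have hlne : lam ≠ 0 := ne_of_gt hlam
  set E : ℝ := ∏ i : Fin m, ∏ _j ∈ Ioi i, (-1 : ℝ) with hE
  have hEE : E * E = 1 := by
    rw [hE, ← Finset.prod_mul_distrib]
    refine Finset.prod_eq_one fun i _ => ?_
    rw [← Finset.prod_mul_distrib]
    exact Finset.prod_eq_one fun j _ => by norm_num
  have hsign : ∀ a : Fin m → ℝ, (∏ i : Fin m, ∏ j ∈ Ioi i, (a i - a j))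
      = E * ∏ i : Fin m, ∏ j ∈ Ioi i, (a j - a i) := by
    intro a
    rw [hE, ← Finset.prod_mul_distrib]
    refine Finset.prod_congr rfl fun i _ => ?_
    rw [← Finset.prod_mul_distrib]
    exact Finset.prod_congr rfl fun j _ => by ring
  -- the key summation identity
  have hmain : ∑ g ∈ univ.filter (fun g : Fin m → Fin (n + 1) => StrictMono g),
      (∏ i : Fin m, ∏ j ∈ Ioi i, (((g j : ℕ) : ℝ) - ((g i : ℕ) : ℝ))) ^ 2 *
        ((∏ j : Fin m, lam ^ ((g j : ℕ)) / (Nat.factorial (g j : ℕ) : ℝ)) *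
          ∏ i : Fin m, ((Nat.factorial (n - (g i : ℕ)) : ℝ))⁻¹)
      = (∏ i : Fin m, lam ^ (i : ℕ) / (Nat.factorial (n - (i : ℕ)) : ℝ)) *
          ((∏ i : Fin m, (1 + lam) ^ (n - (i : ℕ))) *
            ((∏ j : Fin m, ((1 + lam) ^ (j : ℕ))⁻¹) *
              ∏ j : Fin m, (Nat.factorial (j : ℕ) : ℝ))) := by
    have hCB := det_mul_cauchyBinet
      (Matrix.of fun (i : Fin m) (x : Fin (n + 1)) =>
        lam ^ (x : ℕ) * (Nat.descFactorial (x : ℕ) (i : ℕ) : ℝ) /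
          (Nat.factorial (x : ℕ) : ℝ))
      (Matrix.of fun (x : Fin (n + 1)) (j : Fin m) =>
        (Nat.descFactorial (n - (x : ℕ)) (j : ℕ) : ℝ) /
          (Nat.factorial (n - (x : ℕ)) : ℝ))
    rw [detAB lam hlam hmn] at hCB
    have hterm : ∀ g ∈ univ.filter (fun g : Fin m → Fin (n + 1) => StrictMono g),
        det ((Matrix.of fun (i : Fin m) (x : Fin (n + 1)) =>
            lam ^ (x : ℕ) * (Nat.descFactorial (x : ℕ) (i : ℕ) : ℝ) /
              (Nat.factorial (x : ℕ) : ℝ)).submatrix id g) *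
          det ((Matrix.of fun (x : Fin (n + 1)) (j : Fin m) =>
            (Nat.descFactorial (n - (x : ℕ)) (j : ℕ) : ℝ) /
              (Nat.factorial (n - (x : ℕ)) : ℝ)).submatrix g id)
        = E * ((∏ i : Fin m, ∏ j ∈ Ioi i, (((g j : ℕ) : ℝ) - ((g i : ℕ) : ℝ))) ^ 2 *
            ((∏ j : Fin m, lam ^ ((g j : ℕ)) / (Nat.factorial (g j : ℕ) : ℝ)) *
              ∏ i : Fin m, ((Nat.factorial (n - (g i : ℕ)) : ℝ))⁻¹)) := by
      intro g _
      rw [detA, detB]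
      have hW : ∏ i : Fin m, ∏ j ∈ Ioi i,
            (((n - (g j : ℕ) : ℕ) : ℝ) - ((n - (g i : ℕ) : ℕ) : ℝ))
          = ∏ i : Fin m, ∏ j ∈ Ioi i, (((g i : ℕ) : ℝ) - ((g j : ℕ) : ℝ)) := by
        refine Finset.prod_congr rfl fun i _ => Finset.prod_congr rfl fun j _ => ?_
        rw [Nat.cast_sub (Nat.lt_succ_iff.mp (g j).2), Nat.cast_sub (Nat.lt_succ_iff.mp (g i).2)]
        ring
      rw [hW, hsign (fun i => ((g i : ℕ) : ℝ))]
      ring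
    rw [Finset.sum_congr rfl hterm, ← Finset.mul_sum] at hCB
    have hVn : ∏ i : Fin m, ∏ j ∈ Ioi i,
          (((n - (j : ℕ) : ℕ) : ℝ) - ((n - (i : ℕ) : ℕ) : ℝ))
        = E * ∏ j : Fin m, (Nat.factorial (j : ℕ) : ℝ) := by
      have h1 : ∏ i : Fin m, ∏ j ∈ Ioi i,
            (((n - (j : ℕ) : ℕ) : ℝ) - ((n - (i : ℕ) : ℕ) : ℝ))
          = ∏ i : Fin m, ∏ j ∈ Ioi i, (((i : ℕ) : ℝ) - ((j : ℕ) : ℝ)) := by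
        refine Finset.prod_congr rfl fun i _ => Finset.prod_congr rfl fun j _ => ?_
        rw [Nat.cast_sub (le_trans (Nat.le_of_lt_succ (Nat.lt_succ_of_lt j.2)) hmn),
          Nat.cast_sub (le_trans (Nat.le_of_lt_succ (Nat.lt_succ_of_lt i.2)) hmn)]
        ring
      rw [h1, hsign (fun i => ((i : ℕ) : ℝ))]
      congr 1
      rw [← prod_Iio_eq_prod_Ioi (fun i j : Fin m => ((j : ℕ) : ℝ) - ((i : ℕ) : ℝ))]
      exact Finset.prod_congr rfl fun j _ => prod_Iio_sub_eq_factorial j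
    rw [hVn] at hCB
    have h' : E * ((∏ i : Fin m, lam ^ (i : ℕ) / (Nat.factorial (n - (i : ℕ)) : ℝ)) *
          ((∏ i : Fin m, (1 + lam) ^ (n - (i : ℕ))) *
            ((∏ j : Fin m, ((1 + lam) ^ (j : ℕ))⁻¹) *
              ∏ j : Fin m, (Nat.factorial (j : ℕ) : ℝ))))
        = E * ∑ g ∈ univ.filter (fun g : Fin m → Fin (n + 1) => StrictMono g),
            (∏ i : Fin m, ∏ j ∈ Ioi i, (((g j : ℕ) : ℝ) - ((g i : ℕ) : ℝ))) ^ 2 *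
              ((∏ j : Fin m, lam ^ ((g j : ℕ)) / (Nat.factorial (g j : ℕ) : ℝ)) *
                ∏ i : Fin m, ((Nat.factorial (n - (g i : ℕ)) : ℝ))⁻¹) := by
      linear_combination hCB
    calc ∑ g ∈ univ.filter (fun g : Fin m → Fin (n + 1) => StrictMono g),
          (∏ i : Fin m, ∏ j ∈ Ioi i, (((g j : ℕ) : ℝ) - ((g i : ℕ) : ℝ))) ^ 2 *
            ((∏ j : Fin m, lam ^ ((g j : ℕ)) / (Nat.factorial (g j : ℕ) : ℝ)) *
              ∏ i : Fin m, ((Nat.factorial (n - (g i : ℕ)) : ℝ))⁻¹)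
        = (E * E) * ∑ g ∈ univ.filter (fun g : Fin m → Fin (n + 1) => StrictMono g),
            (∏ i : Fin m, ∏ j ∈ Ioi i, (((g j : ℕ) : ℝ) - ((g i : ℕ) : ℝ))) ^ 2 *
              ((∏ j : Fin m, lam ^ ((g j : ℕ)) / (Nat.factorial (g j : ℕ) : ℝ)) *
                ∏ i : Fin m, ((Nat.factorial (n - (g i : ℕ)) : ℝ))⁻¹) := by
          rw [hEE, one_mul]
      _ = E * (E * ∑ g ∈ univ.filter (fun g : Fin m → Fin (n + 1) => StrictMono g),
            (∏ i : Fin m, ∏ j ∈ Ioi i, (((g j : ℕ) : ℝ) - ((g i : ℕ) : ℝ))) ^ 2 *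
              ((∏ j : Fin m, lam ^ ((g j : ℕ)) / (Nat.factorial (g j : ℕ) : ℝ)) *
                ∏ i : Fin m, ((Nat.factorial (n - (g i : ℕ)) : ℝ))⁻¹)) := by ring
      _ = E * (E * ((∏ i : Fin m, lam ^ (i : ℕ) / (Nat.factorial (n - (i : ℕ)) : ℝ)) *
          ((∏ i : Fin m, (1 + lam) ^ (n - (i : ℕ))) *
            ((∏ j : Fin m, ((1 + lam) ^ (j : ℕ))⁻¹) *
              ∏ j : Fin m, (Nat.factorial (j : ℕ) : ℝ))))) := by rw [← h']
      _ = (E * E) * ((∏ i : Fin m, lam ^ (i : ℕ) / (Nat.factorial (n - (i : ℕ)) : ℝ)) *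
          ((∏ i : Fin m, (1 + lam) ^ (n - (i : ℕ))) *
            ((∏ j : Fin m, ((1 + lam) ^ (j : ℕ))⁻¹) *
              ∏ j : Fin m, (Nat.factorial (j : ℕ) : ℝ)))) := by ring
      _ = _ := by rw [hEE, one_mul]
  -- filter congruence
  have hfilter : (Finset.univ.filter (fun x : Fin m → Fin (n + 1) =>
        ∀ i j : Fin m, i < j → x i < x j))
      = univ.filter (fun g : Fin m → Fin (n + 1) => StrictMono g) :=
    Finset.filter_congr fun x _ =>
      ⟨fun h => fun _ _ hab => h _ _ hab, fun h a b hab => h hab⟩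
  rw [hfilter]
  -- rewrite each summand of the goal
  have htgt : ∀ g ∈ univ.filter (fun g : Fin m → Fin (n + 1) => StrictMono g),
      (lam ^ (∑ i, (g i : ℕ)) / lam ^ (m * (m - 1) / 2)) / (1 + lam) ^ (m * (n + 1 - m)) *
        ((∏ j : Fin m, ∏ i ∈ Finset.Iio j, ((g j : ℕ) - (g i : ℕ) : ℝ)) ^ 2 /
          ∏ i : Fin m, ((Nat.factorial (g i) : ℝ) * (Nat.factorial (n - (g i : ℕ)) : ℝ))) *
        ∏ i ∈ Finset.range m, ((Nat.factorial (n - i) : ℝ) / (Nat.factorial i : ℝ))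
      = ((∏ i ∈ Finset.range m, ((Nat.factorial (n - i) : ℝ) / (Nat.factorial i : ℝ))) /
          (lam ^ (m * (m - 1) / 2) * (1 + lam) ^ (m * (n + 1 - m)))) *
        ((∏ i : Fin m, ∏ j ∈ Ioi i, (((g j : ℕ) : ℝ) - ((g i : ℕ) : ℝ))) ^ 2 *
          ((∏ j : Fin m, lam ^ ((g j : ℕ)) / (Nat.factorial (g j : ℕ) : ℝ)) *
            ∏ i : Fin m, ((Nat.factorial (n - (g i : ℕ)) : ℝ))⁻¹)) := by
    intro g _
    have hswap : (∏ j : Fin m, ∏ i ∈ Finset.Iio j, ((g j : ℕ) - (g i : ℕ) : ℝ))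
        = ∏ i : Fin m, ∏ j ∈ Ioi i, (((g j : ℕ) : ℝ) - ((g i : ℕ) : ℝ)) :=
      prod_Iio_eq_prod_Ioi (fun i j : Fin m => ((g j : ℕ) : ℝ) - ((g i : ℕ) : ℝ))
    have hsumpow : lam ^ (∑ i, (g i : ℕ)) = ∏ j : Fin m, lam ^ ((g j : ℕ)) :=
      (Finset.prod_pow_eq_pow_sum univ (fun i => (g i : ℕ)) lam).symm
    have hprodsplit : ∏ i : Fin m,
          ((Nat.factorial (g i) : ℝ) * (Nat.factorial (n - (g i : ℕ)) : ℝ))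
        = (∏ i : Fin m, (Nat.factorial (g i : ℕ) : ℝ)) *
            ∏ i : Fin m, (Nat.factorial (n - (g i : ℕ)) : ℝ) := Finset.prod_mul_distrib
    have hdiv : ∏ j : Fin m, lam ^ ((g j : ℕ)) / (Nat.factorial (g j : ℕ) : ℝ)
        = (∏ j : Fin m, lam ^ ((g j : ℕ))) / ∏ j : Fin m, (Nat.factorial (g j : ℕ) : ℝ) :=
      Finset.prod_div_distrib _ _
    have hinv : ∏ i : Fin m, ((Nat.factorial (n - (g i : ℕ)) : ℝ))⁻¹
        = (∏ i : Fin m, (Nat.factorial (n - (g i : ℕ)) : ℝ))⁻¹ := by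
      rw [← Finset.prod_inv_distrib]
    rw [hswap, hsumpow, hprodsplit, hdiv, hinv]
    ring
  rw [Finset.sum_congr rfl htgt, ← Finset.mul_sum, hmain]
  -- final numerical identity
  rw [Fin.prod_univ_eq_prod_range (fun i => lam ^ i / (Nat.factorial (n - i) : ℝ)) m,
    Fin.prod_univ_eq_prod_range (fun i => (1 + lam) ^ (n - i)) m,
    Fin.prod_univ_eq_prod_range (fun j => ((1 + lam) ^ j)⁻¹) m,
    Fin.prod_univ_eq_prod_range (fun j => (Nat.factorial j : ℝ)) m]
  have hsum1 : ∑ i ∈ range m, i = m * (m - 1) / 2 := Finset.sum_range_id m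
  have hsum2 : ∑ i ∈ range m, (n - i) = m * (n + 1 - m) + ∑ i ∈ range m, i := by
    have ha : ∑ i ∈ range m, (n - i) + ∑ i ∈ range m, i = m * n := by
      rw [← Finset.sum_add_distrib]
      have hni : ∀ i ∈ range m, n - i + i = n := fun i hi => by rw [mem_range] at hi; omega
      rw [Finset.sum_congr rfl hni, Finset.sum_const, Finset.card_range, smul_eq_mul]
    have hb := Finset.sum_range_id_mul_two m
    have hc : m * (n + 1 - m) + m * (m - 1) = m * n := by
      rw [← Nat.mul_add]
      congr 1
      omega
    generalize hA : m * n = A at ha hc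
    generalize hB : m * (m - 1) = B at hb hc
    generalize hC : m * (n + 1 - m) = C1 at hc ⊢
    omega
  have hfinal : (∏ i ∈ Finset.range m, ((Nat.factorial (n - i) : ℝ) / (Nat.factorial i : ℝ))) *
      ((∏ i ∈ range m, lam ^ i / (Nat.factorial (n - i) : ℝ)) *
        ((∏ i ∈ range m, (1 + lam) ^ (n - i)) *
          ((∏ j ∈ range m, ((1 + lam) ^ j)⁻¹) *
            ∏ j ∈ range m, (Nat.factorial j : ℝ))))
      = lam ^ (m * (m - 1) / 2) * (1 + lam) ^ (m * (n + 1 - m)) := by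
    rw [← Finset.prod_mul_distrib, ← Finset.prod_mul_distrib, ← Finset.prod_mul_distrib,
      ← Finset.prod_mul_distrib]
    have hterm2 : ∀ i ∈ range m,
        (Nat.factorial (n - i) : ℝ) / (Nat.factorial i : ℝ) *
          (lam ^ i / (Nat.factorial (n - i) : ℝ) *
            ((1 + lam) ^ (n - i) * (((1 + lam) ^ i)⁻¹ * (Nat.factorial i : ℝ))))
        = lam ^ i * ((1 + lam) ^ (n - i) * (((1 + lam) ^ i)⁻¹)) := by
      intro i _
      have h1 : (Nat.factorial (n - i) : ℝ) ≠ 0 := Nat.cast_ne_zero.2 (Nat.factorial_ne_zero _)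
      have h2 : (Nat.factorial i : ℝ) ≠ 0 := Nat.cast_ne_zero.2 (Nat.factorial_ne_zero _)
      field_simp
    rw [Finset.prod_congr rfl hterm2, Finset.prod_mul_distrib, Finset.prod_mul_distrib,
      Finset.prod_pow_eq_pow_sum, Finset.prod_pow_eq_pow_sum, Finset.prod_inv_distrib,
      Finset.prod_pow_eq_pow_sum, hsum1, hsum2, pow_add, hsum1]
    field_simp
  rw [div_mul_eq_mul_div, hfinal]
  exact div_self (by positivity)
end

section
/- Define a sequence (α_k) of rational functions in a parameter v by α_0 = v and α_k = sum over ℓ from 2 to k of (v * α_{ℓ-2} * α_{k-ℓ} - (2^ℓ * B_ℓ / ℓ!) * α_{k-ℓ}) for k ≥ 1 (so α_1 = 0). Then the formal power series f(z) = sum α_k z^k satisfies the quadratic equation v*z^2*f(z)^2 - z*coth(z)*f(z) + v = 0, where z*coth(z) is interpreted as the formal power series sum over even ℓ ≥ 0 of (2^ℓ B_ℓ/ℓ!) z^ℓ. -/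
/-- The generating function `f(z) = ∑ α_k z^k` of the sequence defined by `α_0 = v` and
`α_k = ∑_{ℓ=2}^{k} (v α_{ℓ-2} α_{k-ℓ} - (2^ℓ B_ℓ/ℓ!) α_{k-ℓ})` satisfies the quadratic equation
`v z² f(z)² - z coth(z) f(z) + v = 0`, where `z coth(z) = ∑_{ℓ even} (2^ℓ B_ℓ/ℓ!) z^ℓ`
as a formal power series. -/
theorem alpha_generating_function_quadratic (v : ℚ) (α : ℕ → ℚ) (h0 : α 0 = v)
    (hrec : ∀ k, 1 ≤ k → α k = ∑ ℓ ∈ Finset.Icc 2 k,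
      (v * α (ℓ - 2) * α (k - ℓ) -
        2 ^ ℓ * bernoulli ℓ / (Nat.factorial ℓ : ℚ) * α (k - ℓ))) :
    PowerSeries.C v * PowerSeries.X ^ 2 * (PowerSeries.mk α) ^ 2
      - (PowerSeries.mk fun ℓ =>
          if Even ℓ then 2 ^ ℓ * bernoulli ℓ / (Nat.factorial ℓ : ℚ) else 0)
        * PowerSeries.mk α
      + PowerSeries.C v = 0 := by
  set c : ℕ → ℚ := fun ℓ => 2 ^ ℓ * bernoulli ℓ / (Nat.factorial ℓ : ℚ) with hcdef
  have hg : ∀ ℓ, (if Even ℓ then c ℓ else 0) = if ℓ = 1 then 0 else c ℓ := by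
    intro ℓ
    rcases Nat.even_or_odd ℓ with he | ho
    · have h1 : ℓ ≠ 1 := by rintro rfl; exact Nat.not_even_one he
      simp [he, h1]
    · rcases eq_or_ne ℓ 1 with rfl | hne
      · simp
      · have h1 : 1 < ℓ := lt_of_le_of_ne ho.pos (Ne.symm hne)
        have hb : bernoulli ℓ = 0 := by
          rw [bernoulli_eq_bernoulli'_of_ne_one hne, bernoulli'_eq_zero_of_odd ho h1]
        simp [Nat.not_even_iff_odd.mpr ho, hne, hcdef, hb]
  have hc0 : c 0 = 1 := by simp [hcdef]
  rw [sub_add_eq_add_sub, sub_eq_zero]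
  ext k
  have key : ∀ x : PowerSeries ℚ, (PowerSeries.coeff k)
      ((PowerSeries.mk fun ℓ => if Even ℓ then c ℓ else 0) * x)
      = ∑ i ∈ Finset.range (k + 1),
          (if i = 1 then 0 else c i) * (PowerSeries.coeff (k - i)) x := by
    intro x
    rw [PowerSeries.coeff_mul, Finset.Nat.sum_antidiagonal_eq_sum_range_succ_mk]
    simp [hg]
  rw [map_add, key, PowerSeries.coeff_C,
    show PowerSeries.C v * PowerSeries.X ^ 2 * (PowerSeries.mk α) ^ 2
      = PowerSeries.C v * (PowerSeries.mk α) ^ 2 * PowerSeries.X ^ 2 by ring,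
    PowerSeries.coeff_mul_X_pow', PowerSeries.coeff_C_mul]
  simp only [PowerSeries.coeff_mk]
  rcases Nat.eq_zero_or_pos k with rfl | hk
  · norm_num [hcdef, h0]
  -- k ≥ 1
  have hrk := hrec k hk
  have hsum : ∀ f : ℕ → ℚ, ∑ ℓ ∈ Finset.Icc 2 k, f ℓ
      = ∑ i ∈ Finset.range (k - 1), f (2 + i) := by
    intro f
    rw [← Finset.Ico_add_one_right_eq_Icc, Finset.sum_Ico_eq_sum_range]
    exact Finset.sum_congr rfl fun i _ => rfl
  obtain ⟨m, rfl⟩ : ∃ m, k = m + 1 := ⟨k - 1, by omega⟩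
  rw [Finset.sum_range_succ']
  have hrhs1 : ∑ i ∈ Finset.range (m + 1),
      (if i + 1 = 1 then 0 else c (i + 1)) * α (m + 1 - (i + 1))
      = ∑ i ∈ Finset.range m, c (i + 2) * α (m - 1 - i) := by
    rcases m with _ | n
    · simp
    rw [Finset.sum_range_succ']
    have h00 : (if 0 + 1 = 1 then (0 : ℚ) else c (0 + 1)) = 0 := if_pos rfl
    rw [h00, zero_mul, add_zero]
    refine Finset.sum_congr rfl fun i _ => ?_
    rw [if_neg (by omega : ¬ i + 1 + 1 = 1)]
    congr 2
    omega
  rw [hrhs1, if_neg (by omega : ¬ (0 : ℕ) = 1), hc0, one_mul, Nat.sub_zero,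
    if_neg (by omega : ¬ m + 1 = 0), add_zero]
  -- use the recursion for α (m+1)
  rw [hrk, hsum, Finset.sum_sub_distrib]
  rcases Nat.eq_zero_or_pos m with rfl | hm
  · simp
  rw [if_pos (by omega : 2 ≤ m + 1)]
  have hm' : m - 1 + 1 = m := by omega
  have hsq : (PowerSeries.coeff (m + 1 - 2)) ((PowerSeries.mk α) ^ 2)
      = ∑ i ∈ Finset.range (m - 1 + 1), α i * α (m - 1 - i) := by
    rw [pow_two, PowerSeries.coeff_mul, Finset.Nat.sum_antidiagonal_eq_sum_range_succ_mk]
    simp only [PowerSeries.coeff_mk]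
    refine Finset.sum_congr rfl fun i _ => ?_
    rw [show m + 1 - 2 - i = m - 1 - i from by omega]
  rw [hsq]
  have e1 : ∑ i ∈ Finset.range (m + 1 - 1), v * α (2 + i - 2) * α (m + 1 - (2 + i))
      = v * ∑ i ∈ Finset.range (m - 1 + 1), α i * α (m - 1 - i) := by
    rw [Finset.mul_sum, show m + 1 - 1 = m - 1 + 1 from by omega]
    refine Finset.sum_congr rfl fun i _ => ?_
    rw [show 2 + i - 2 = i from by omega, show m + 1 - (2 + i) = m - 1 - i from by omega]
    ring
  have e2 : ∑ i ∈ Finset.range (m + 1 - 1), c (2 + i) * α (m + 1 - (2 + i))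
      = ∑ i ∈ Finset.range m, c (i + 2) * α (m - 1 - i) := by
    rw [show m + 1 - 1 = m from by omega]
    refine Finset.sum_congr rfl fun i _ => ?_
    rw [show 2 + i = i + 2 from by omega, show m + 1 - (i + 2) = m - 1 - i from by omega]
  rw [e1, e2]
  ring
end

section
/- With L_{i,j}(v) defined by L_{0,j} = δ_{0,j} and L_{i+1,j}(v) = (L_{i,j}(v) + L_{i,j-1}(-v)) β_i(v), the row sums satisfy sum over k from 0 to n of L_{n,k}(v) = 2^n * prod over k from 1 to n of β_k(v) β_{k-1}(v), for every n ≥ 0. -/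
/-- `β_i(v) = (1-2v)⁻¹` if `i ≡ 0 mod 4`, `(1+2v)⁻¹` if `i ≡ 2 mod 4`, and `1` if `i` is odd. -/
noncomputable def betaFn (i : ℕ) (v : ℝ) : ℝ :=
  if i % 4 = 0 then 1 / (1 - 2 * v) else if i % 4 = 2 then 1 / (1 + 2 * v) else 1

/-- `L_{0,j} = δ_{0,j}` and `L_{i+1,j}(v) = (L_{i,j}(v) + L_{i,j-1}(-v)) β_i(v)`. -/
noncomputable def Lcoef : ℕ → ℤ → ℝ → ℝ
  | 0, j, _ => if j = 0 then 1 else 0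
  | (i + 1), j, v => (Lcoef i j v + Lcoef i (j - 1) (-v)) * betaFn i v

lemma one_sub_ne (v : ℝ) (hv : |v| < 1 / 2) : (1 : ℝ) - 2 * v ≠ 0 := by
  rw [abs_lt] at hv; nlinarith [hv.1, hv.2]

lemma one_add_ne (v : ℝ) (hv : |v| < 1 / 2) : (1 : ℝ) + 2 * v ≠ 0 := by
  rw [abs_lt] at hv; nlinarith [hv.1, hv.2]

lemma betaFn_add_two (k : ℕ) (v : ℝ) : betaFn (k + 2) v = betaFn k (-v) := by
  have h : k % 4 = 0 ∨ k % 4 = 1 ∨ k % 4 = 2 ∨ k % 4 = 3 := by omega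
  rcases h with h | h | h | h <;>
    · have h2 : (k + 2) % 4 = (k % 4 + 2) % 4 := by omega
      simp [betaFn, h, h2]
      try ring_nf

lemma betaFn_ne_zero (k : ℕ) (v : ℝ) (hv : |v| < 1 / 2) : betaFn k v ≠ 0 := by
  unfold betaFn
  split_ifs
  · exact one_div_ne_zero (one_sub_ne v hv)
  · exact one_div_ne_zero (one_add_ne v hv)
  · norm_num

lemma betaFn_add_neg (k : ℕ) (v : ℝ) (hv : |v| < 1 / 2) :
    betaFn k v + betaFn k (-v) = 2 * (betaFn k v * betaFn k (-v)) := by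
  have h1 := one_sub_ne v hv
  have h2 := one_add_ne v hv
  unfold betaFn
  split_ifs
  · have e : 1 - 2 * (-v) = 1 + 2 * v := by ring
    rw [e]; field_simp; ring
  · have e : 1 + 2 * (-v) = 1 - 2 * v := by ring
    rw [e]; field_simp; ring
  · ring

noncomputable def Pprod (n : ℕ) (v : ℝ) : ℝ :=
  ∏ k ∈ Finset.Icc 1 n, betaFn k v * betaFn (k - 1) v

lemma Pprod_succ (n : ℕ) (v : ℝ) :
    Pprod (n + 1) v = Pprod n v * (betaFn (n + 1) v * betaFn n v) := by
  unfold Pprod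
  rw [Finset.prod_Icc_succ_top (by omega)]
  simp

lemma Pprod_sym (n : ℕ) (v : ℝ) :
    Pprod n (-v) * betaFn (n + 1) (-v) = Pprod n v * betaFn (n + 1) v := by
  induction n with
  | zero => simp [Pprod, betaFn]
  | succ n ih =>
      rw [Pprod_succ, Pprod_succ]
      have h1 : betaFn (n + 2) (-v) = betaFn n v := by
        rw [betaFn_add_two]; ring_nf
      have h2 : betaFn (n + 2) v = betaFn n (-v) := betaFn_add_two n v
      rw [h1, h2]
      linear_combination (betaFn n (-v) * betaFn n v) * ih

lemma Pprod_key (n : ℕ) (v : ℝ) (hv : |v| < 1 / 2) :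
    Pprod n v + Pprod n (-v) = 2 * betaFn (n + 1) v * Pprod n v := by
  have hne : betaFn (n + 1) (-v) ≠ 0 := by
    apply betaFn_ne_zero
    rwa [abs_neg]
  apply mul_right_cancel₀ hne
  have h1 := Pprod_sym n v
  have h2 := betaFn_add_neg (n + 1) v hv
  linear_combination h1 + Pprod n v * h2

lemma Lcoef_eq_zero : ∀ (i : ℕ) (j : ℤ) (v : ℝ), (j < 0 ∨ (i : ℤ) < j) → Lcoef i j v = 0 := by
  intro i
  induction i with
  | zero =>
      intro j v h
      have : j ≠ 0 := by omega
      simp [Lcoef, this]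
  | succ i ih =>
      intro j v h
      have h1 : Lcoef i j v = 0 := ih j v (by omega)
      have h2 : Lcoef i (j - 1) (-v) = 0 := ih (j - 1) (-v) (by omega)
      simp [Lcoef, h1, h2]

lemma row_sum_aux (n : ℕ) : ∀ (v : ℝ), |v| < 1 / 2 →
    ∑ k ∈ Finset.range (n + 1), Lcoef n k v = 2 ^ n * Pprod n v := by
  induction n with
  | zero => intro v _; simp [Lcoef, Pprod]
  | succ n ih =>
      intro v hv
      have hv' : |(-v)| < 1 / 2 := by rwa [abs_neg]
      have e1 : ∑ k ∈ Finset.range (n + 2), Lcoef (n + 1) k v =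
          (∑ k ∈ Finset.range (n + 2), (Lcoef n k v + Lcoef n ((k : ℤ) - 1) (-v))) *
            betaFn n v := by
        rw [Finset.sum_mul]
        rfl
      have e2 : ∑ k ∈ Finset.range (n + 2), Lcoef n (k : ℤ) v =
          ∑ k ∈ Finset.range (n + 1), Lcoef n (k : ℤ) v := by
        rw [Finset.sum_range_succ]
        have hz : Lcoef n ((n + 1 : ℕ) : ℤ) v = 0 :=
          Lcoef_eq_zero n _ v (by push_cast; omega)
        rw [hz]; ring
      have e3 : ∑ k ∈ Finset.range (n + 2), Lcoef n ((k : ℤ) - 1) (-v) =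
          ∑ k ∈ Finset.range (n + 1), Lcoef n (k : ℤ) (-v) := by
        rw [Finset.sum_range_succ']
        rw [Lcoef_eq_zero n ((0 : ℕ) - 1) (-v) (by omega)]
        simp only [add_zero]
        apply Finset.sum_congr rfl
        intro k _
        congr 1
        push_cast
        ring
      rw [e1, Finset.sum_add_distrib, e2, e3, ih v hv, ih (-v) hv']
      have hkey := Pprod_key n v hv
      rw [Pprod_succ]
      have hb : betaFn (n + 1) v * betaFn n v = betaFn (n + 1) v * betaFn (n + 1 - 1) v := by
        norm_num
      linear_combination (2 ^ n * betaFn n v) * hkey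

/-- Row sums: `∑_{k=0}^{n} L_{n,k}(v) = 2^n ∏_{k=1}^{n} β_k(v) β_{k-1}(v)`. -/
theorem Lcoef_row_sum (v : ℝ) (hv : |v| < 1 / 2) (n : ℕ) :
    ∑ k ∈ Finset.range (n + 1), Lcoef n k v =
      2 ^ n * ∏ k ∈ Finset.Icc 1 n, betaFn k v * betaFn (k - 1) v := by
  have := row_sum_aux n v hv
  rwa [Pprod] at this
end

section
/- For y₁ ≤ y₂ nonnegative integers, ℓ an integer, j ≥ 1, and v real, the alternating weighted power sum sum over x from y₁ to y₂ of (-1)^(ℓ+x) x^(j-1) Ω(x) — where Ω(y₂) = 1/2 + v(-1)^(ℓ+1+y₂), Ω(y₁) = 1/2 - v(-1)^(ℓ+1+y₁), and Ω(x) = 1 otherwise — equals -v(y₂^(j-1) - y₁^(j-1)) - sum over k from 2 to j of (B_k/j) binom(j,k) (2^k - 1) ((-1)^(ℓ+1+y₂) y₂^(j-k) - (-1)^(ℓ+1+y₁) y₁^(j-k)). -/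
section AuxAWPS
open Finset PowerSeries Nat

lemma psE : (PowerSeries.rescale (2:ℚ) (bernoulliPowerSeries ℚ)) * (PowerSeries.exp ℚ + 1)
    = 2 * bernoulliPowerSeries ℚ := by
  have hexp : PowerSeries.exp ℚ - 1 ≠ 0 := by
    simp only [PowerSeries.exp, PowerSeries.ext_iff, Ne, not_forall]
    use 1
    simp [Nat.factorial_ne_zero]
  apply mul_right_cancel₀ hexp
  have h2 : (PowerSeries.exp ℚ + 1) * (PowerSeries.exp ℚ - 1)
      = PowerSeries.rescale (2:ℚ) (PowerSeries.exp ℚ - 1) := by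
    have h := PowerSeries.exp_pow_eq_rescale_exp (A := ℚ) 2
    push_cast at h
    rw [map_sub, ← h, map_one]
    ring
  calc PowerSeries.rescale (2:ℚ) (bernoulliPowerSeries ℚ) * (PowerSeries.exp ℚ + 1) * (PowerSeries.exp ℚ - 1)
      = PowerSeries.rescale (2:ℚ) (bernoulliPowerSeries ℚ * (PowerSeries.exp ℚ - 1)) := by
        rw [map_mul, mul_assoc, h2]
    _ = PowerSeries.rescale (2:ℚ) PowerSeries.X := by rw [bernoulliPowerSeries_mul_exp_sub_one]
    _ = 2 * bernoulliPowerSeries ℚ * (PowerSeries.exp ℚ - 1) := by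
        rw [mul_assoc, bernoulliPowerSeries_mul_exp_sub_one]
        have : (2 : PowerSeries ℚ) = (PowerSeries.C (R := ℚ)) 2 := (map_ofNat ((PowerSeries.C (R := ℚ))) 2).symm
        rw [this]
        ext n
        simp only [PowerSeries.coeff_rescale, PowerSeries.coeff_X, PowerSeries.coeff_C_mul]
        rcases eq_or_ne n 1 with rfl | hn
        · simp
        · simp [hn]

lemma E (m : ℕ) : ∑ k ∈ Finset.range (m+1), (m.choose k : ℚ) * 2^k * bernoulli k
    = (2 - 2^m) * bernoulli m := by
  have h := congrArg (PowerSeries.coeff (R := ℚ) m) psE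
  simp only [PowerSeries.coeff_mul, PowerSeries.coeff_rescale, bernoulliPowerSeries,
    PowerSeries.coeff_mk, map_add, PowerSeries.coeff_one, PowerSeries.coeff_exp,
    Finset.Nat.sum_antidiagonal_eq_sum_range_succ_mk, Algebra.algebraMap_self, map_div₀,
    RingHom.id_apply] at h
  have hfact : ∀ n : ℕ, (n ! : ℚ) ≠ 0 := fun n => Nat.cast_ne_zero.mpr n.factorial_ne_zero
  have hr : ∑ x ∈ Finset.range m.succ, (PowerSeries.coeff (R := ℚ) x) 2 * (bernoulli (m - x) / ↑(m - x)!)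
      = 2 * (bernoulli m / ↑m !) := by
    rw [Finset.sum_eq_single 0]
    · simp only [Nat.sub_zero]
      rw [show (2 : PowerSeries ℚ) = (PowerSeries.C (R := ℚ)) 2 from (map_ofNat ((PowerSeries.C (R := ℚ))) 2).symm,
        PowerSeries.coeff_zero_eq_constantCoeff, PowerSeries.constantCoeff_C]
    · intro b _ hb
      rw [show (2 : PowerSeries ℚ) = (PowerSeries.C (R := ℚ)) 2 from (map_ofNat ((PowerSeries.C (R := ℚ))) 2).symm,
        PowerSeries.coeff_C, if_neg hb, zero_mul]
    · simp
  rw [hr, Finset.sum_range_succ] at h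
  simp only [Nat.sub_self, if_pos rfl, Nat.factorial_zero, Nat.cast_one] at h
  norm_num at h
  have hl : ∀ x ∈ Finset.range m, 2 ^ x * (bernoulli x / (x ! : ℚ)) *
      ((↑(m - x)! : ℚ)⁻¹ + if m - x = 0 then 1 else 0) = 2 ^ x * bernoulli x / (↑x ! * ↑(m - x)!) := by
    intro x hx
    rw [Finset.mem_range] at hx
    rw [if_neg (Nat.sub_ne_zero_of_lt hx)]
    field_simp
    simp
  rw [Finset.sum_congr rfl hl] at h
  rw [Finset.sum_range_succ]
  have hterm : ∀ k ∈ Finset.range m, (↑(m.choose k) : ℚ) * 2 ^ k * bernoulli k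
      = ↑m ! * (2 ^ k * bernoulli k / (↑k ! * ↑(m - k)!)) := by
    intro k hk
    rw [Finset.mem_range] at hk
    rw [Nat.cast_choose ℚ hk.le]
    field_simp
  rw [Finset.sum_congr rfl hterm, ← Finset.mul_sum]
  have h2 : ∑ x ∈ Finset.range m, 2 ^ x * bernoulli x / (↑x ! * ↑(m - x)!)
      = 2 * (bernoulli m / ↑m !) - 2 ^ m * (bernoulli m / ↑m !) * 2 := by
    linarith [h]
  rw [h2, Nat.choose_self]
  field_simp
  ring

lemma L2 (m : ℕ) (hm : 2 ≤ m) :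
    ∑ k ∈ Finset.Icc 2 m, (bernoulli k) * (m.choose k : ℚ) * (2^k - 1)
      = m/2 - (2^m - 1) * bernoulli m := by
  have hset : Finset.range (m+1) = insert 0 (insert 1 (Finset.Icc 2 m)) := by
    ext x; simp [Nat.lt_succ_iff]; omega
  have h0 : (0:ℕ) ∉ insert 1 (Finset.Icc 2 m) := by simp
  have h1 : (1:ℕ) ∉ Finset.Icc 2 m := by simp
  have hE := E m
  have hB : ∑ k ∈ Finset.range (m+1), (m.choose k : ℚ) * bernoulli k = bernoulli m := by
    rw [Finset.sum_range_succ, sum_bernoulli, if_neg (by omega), Nat.choose_self]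
    simp
  rw [hset, Finset.sum_insert h0, Finset.sum_insert h1] at hE hB
  simp only [Nat.choose_zero_right, Nat.choose_one_right, bernoulli_zero, bernoulli_one,
    pow_zero, pow_one, Nat.cast_one, mul_one, one_mul] at hE hB
  have expand : ∑ k ∈ Finset.Icc 2 m, (bernoulli k) * (m.choose k : ℚ) * (2^k - 1)
      = ∑ k ∈ Finset.Icc 2 m, (m.choose k : ℚ) * 2^k * bernoulli k
        - ∑ k ∈ Finset.Icc 2 m, (m.choose k : ℚ) * bernoulli k := by
    rw [← Finset.sum_sub_distrib]
    congr 1 with k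
    ring
  rw [expand]
  have e1 : ∑ k ∈ Finset.Icc 2 m, (m.choose k : ℚ) * 2^k * bernoulli k
      = (2 - 2^m) * bernoulli m - 1 + m := by linarith
  have e2 : ∑ k ∈ Finset.Icc 2 m, (m.choose k : ℚ) * bernoulli k
      = bernoulli m - 1 + m/2 := by linarith
  rw [e1, e2]; ring

lemma expand1 (j k : ℕ) (hk : k ≤ j) (y : ℝ) :
    (y+1)^(j-k) = ∑ m ∈ Finset.Icc k j, ((j-k).choose (m-k) : ℝ) * y^(j-m) := by
  rw [add_pow]
  simp only [one_pow, mul_one]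
  refine Finset.sum_nbij' (i := fun i => j - i) (j := fun m => j - m) ?_ ?_ ?_ ?_ ?_
  · intro a ha; simp [Finset.mem_range] at ha ⊢; omega
  · intro a ha; simp [Finset.mem_range] at ha ⊢; omega
  · intro a ha; simp [Finset.mem_range] at ha; show j - (j - a) = a; omega
  · intro a ha; simp at ha; show j - (j - a) = a; omega
  · intro a ha
    simp [Finset.mem_range] at ha
    have h1 : j - (j - a) = a := by omega
    have h2 : (j - k).choose (j - a - k) = (j - k).choose a := by
      have : j - a - k = (j - k) - a := by omega
      rw [this, Nat.choose_symm (by omega)]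
    rw [h1, h2]
    ring

lemma L2R (m : ℕ) (hm : 2 ≤ m) :
    ∑ k ∈ Finset.Icc 2 m, (bernoulli k : ℝ) * (m.choose k : ℝ) * (2^k - 1)
      = m/2 - (2^m - 1) * (bernoulli m : ℝ) := by
  have := congrArg (Rat.cast : ℚ → ℝ) (L2 m hm)
  push_cast at this
  convert this using 2

lemma L3 (j : ℕ) (hj : 1 ≤ j) (y : ℝ) :
    ∑ k ∈ Finset.Icc 2 j, (bernoulli k : ℝ) * (j.choose k : ℝ) * (2^k - 1) *
        ((y+1)^(j-k) + y^(j-k))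
      = (j/2) * ((y+1)^(j-1) - y^(j-1)) := by
  have step1 : ∑ k ∈ Finset.Icc 2 j, (bernoulli k : ℝ) * (j.choose k : ℝ) * (2^k - 1) *
        ((y+1)^(j-k) + y^(j-k))
      = (∑ k ∈ Finset.Icc 2 j, ∑ m ∈ Finset.Icc k j,
          (bernoulli k : ℝ) * (j.choose k : ℝ) * (2^k - 1) * ((j-k).choose (m-k) : ℝ) * y^(j-m))
        + ∑ k ∈ Finset.Icc 2 j, (bernoulli k : ℝ) * (j.choose k : ℝ) * (2^k - 1) * y^(j-k) := by
    rw [← Finset.sum_add_distrib]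
    refine Finset.sum_congr rfl fun k hk => ?_
    rw [Finset.mem_Icc] at hk
    rw [expand1 j k hk.2 y, mul_add, Finset.mul_sum]
    congr 1
    refine Finset.sum_congr rfl fun m _ => ?_
    ring
  have step2 : (∑ k ∈ Finset.Icc 2 j, ∑ m ∈ Finset.Icc k j,
          (bernoulli k : ℝ) * (j.choose k : ℝ) * (2^k - 1) * ((j-k).choose (m-k) : ℝ) * y^(j-m))
      = ∑ m ∈ Finset.Icc 2 j, ∑ k ∈ Finset.Icc 2 m,
          (bernoulli k : ℝ) * (j.choose k : ℝ) * (2^k - 1) * ((j-k).choose (m-k) : ℝ) * y^(j-m) := by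
    refine Finset.sum_comm' ?_
    intro k m
    simp only [Finset.mem_Icc]
    omega
  have step3 : ∀ m ∈ Finset.Icc 2 j, (∑ k ∈ Finset.Icc 2 m,
          (bernoulli k : ℝ) * (j.choose k : ℝ) * (2^k - 1) * ((j-k).choose (m-k) : ℝ) * y^(j-m))
      = (j.choose m : ℝ) * ((m:ℝ)/2 - (2^m - 1) * (bernoulli m : ℝ)) * y^(j-m) := by
    intro m hm
    rw [Finset.mem_Icc] at hm
    have key : ∀ k ∈ Finset.Icc 2 m,
        (bernoulli k : ℝ) * (j.choose k : ℝ) * (2^k - 1) * ((j-k).choose (m-k) : ℝ) * y^(j-m)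
          = ((bernoulli k : ℝ) * (m.choose k : ℝ) * (2^k - 1)) * ((j.choose m : ℝ) * y^(j-m)) := by
      intro k hk
      rw [Finset.mem_Icc] at hk
      have hc := Nat.choose_mul (n := j) hk.2
      have hcR : (j.choose k : ℝ) * ((j-k).choose (m-k) : ℝ) = (j.choose m : ℝ) * (m.choose k : ℝ) := by
        exact_mod_cast congrArg (Nat.cast : ℕ → ℝ) hc.symm
      linear_combination (bernoulli k : ℝ) * (2^k-1) * y^(j-m) * hcR
    rw [Finset.sum_congr rfl key, ← Finset.sum_mul, L2R m hm.1]
    ring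
  rw [step1, step2, Finset.sum_congr rfl step3, ← Finset.sum_add_distrib]
  have rhs1 : (y+1)^(j-1) - y^(j-1) = ∑ m ∈ Finset.Icc 2 j, ((j-1).choose (m-1) : ℝ) * y^(j-m) := by
    rw [expand1 j 1 hj y]
    have hins : Finset.Icc 1 j = insert 1 (Finset.Icc 2 j) := by
      ext x; simp; omega
    rw [hins, Finset.sum_insert (by simp)]
    simp
  rw [rhs1, Finset.mul_sum]
  refine Finset.sum_congr rfl fun m hm => ?_
  rw [Finset.mem_Icc] at hm
  have hc : j * ((j-1).choose (m-1)) = j.choose m * m := by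
    have h := Nat.add_one_mul_choose_eq (j-1) (m-1)
    simpa [Nat.succ_eq_add_one, Nat.sub_add_cancel (show 1 ≤ j by omega),
      Nat.sub_add_cancel (show 1 ≤ m by omega)] using h
  have hcR : (j : ℝ) * ((j-1).choose (m-1) : ℝ) = (j.choose m : ℝ) * (m : ℝ) := by
    exact_mod_cast congrArg (Nat.cast : ℕ → ℝ) hc
  linear_combination (-(y^(j-m))/2) * hcR

lemma L4 (j : ℕ) (hj : 1 ≤ j) (y : ℝ) :
    ((y+1)^(j-1)/2 + (∑ k ∈ Finset.Icc 2 j, (bernoulli k:ℝ) * (j.choose k) * (2^k-1) * (y+1)^(j-k))/j)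
      + (y^(j-1)/2 + (∑ k ∈ Finset.Icc 2 j, (bernoulli k:ℝ) * (j.choose k) * (2^k-1) * y^(j-k))/j)
    = (y+1)^(j-1) := by
  have hL := L3 j hj y
  have hcomb : (∑ k ∈ Finset.Icc 2 j, (bernoulli k:ℝ) * (j.choose k) * (2^k-1) * (y+1)^(j-k))
      + (∑ k ∈ Finset.Icc 2 j, (bernoulli k:ℝ) * (j.choose k) * (2^k-1) * y^(j-k))
      = ∑ k ∈ Finset.Icc 2 j, (bernoulli k : ℝ) * (j.choose k : ℝ) * (2^k - 1) *
        ((y+1)^(j-k) + y^(j-k)) := by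
    rw [← Finset.sum_add_distrib]
    exact Finset.sum_congr rfl fun k _ => by ring
  have hj' : (j:ℝ) ≠ 0 := Nat.cast_ne_zero.mpr (by omega)
  field_simp
  linear_combination 2 * hcomb + 2 * hL

lemma M (j : ℕ) (hj : 1 ≤ j) (n : ℕ) :
    ∑ x ∈ Finset.range (n+1), (-1:ℝ)^x * (x:ℝ)^(j-1)
      = (-1:ℝ)^n * ((n:ℝ)^(j-1)/2
          + (∑ k ∈ Finset.Icc 2 j, (bernoulli k:ℝ) * (j.choose k) * (2^k-1) * (n:ℝ)^(j-k))/j)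
        - (bernoulli j:ℝ) * (2^j-1)/j := by
  induction n with
  | zero =>
    rw [Finset.sum_range_one]
    rcases eq_or_lt_of_le hj with hj1 | hj2
    · subst hj1  -- wrong direction maybe
      simp [bernoulli_one]
      norm_num
    · have hj2' : 2 ≤ j := hj2
      have hz : (0:ℝ)^(j-1) = 0 := zero_pow (by omega)
      have hS : ∑ k ∈ Finset.Icc 2 j, (bernoulli k:ℝ) * (j.choose k) * (2^k-1) * (0:ℝ)^(j-k)
          = (bernoulli j:ℝ) * (2^j-1) := by
        rw [Finset.sum_eq_single j]
        · simp [Nat.choose_self]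
        · intro k hk hkj
          rw [Finset.mem_Icc] at hk
          rw [zero_pow (by omega), mul_zero]
        · intro hj3
          exact absurd (Finset.mem_Icc.mpr ⟨hj2', le_refl j⟩) hj3
      simp only [Nat.cast_zero, pow_zero, one_mul, hz, hS]
      ring
  | succ n ih =>
    rw [Finset.sum_range_succ, ih]
    have key := L4 j hj (n : ℝ)
    push_cast
    linear_combination (-(-1:ℝ)^(n+1)) * key

end AuxAWPS

/-- Alternating weighted power sum for the two-periodic interlacing step:
`∑_{x=y₁}^{y₂} (-1)^{ℓ+x} x^{j-1} Ω(x) = -v(y₂^{j-1} - y₁^{j-1})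
  - ∑_{k=2}^{j} (B_k/j) C(j,k) (2^k-1) ((-1)^{ℓ+1+y₂} y₂^{j-k} - (-1)^{ℓ+1+y₁} y₁^{j-k})`
with `Ω(y₂) = 1/2 + v(-1)^{ℓ+1+y₂}`, `Ω(y₁) = 1/2 - v(-1)^{ℓ+1+y₁}`, `Ω(x) = 1` otherwise. -/
theorem alternating_weighted_power_sum (v : ℝ) (ℓ : ℤ) (j : ℕ) (hj : 1 ≤ j)
    (y₁ y₂ : ℕ) (h : y₁ < y₂) :
    ∑ x ∈ Finset.Icc y₁ y₂, (-1 : ℝ) ^ (ℓ + (x : ℤ)) * (x : ℝ) ^ (j - 1) *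
        (if x = y₂ then 1 / 2 + v * (-1 : ℝ) ^ (ℓ + 1 + (y₂ : ℤ))
         else if x = y₁ then 1 / 2 - v * (-1 : ℝ) ^ (ℓ + 1 + (y₁ : ℤ)) else 1)
      = -v * ((y₂ : ℝ) ^ (j - 1) - (y₁ : ℝ) ^ (j - 1))
        - ∑ k ∈ Finset.Icc 2 j, ((bernoulli k : ℝ) / j) * (j.choose k) * (2 ^ k - 1) *
            ((-1 : ℝ) ^ (ℓ + 1 + (y₂ : ℤ)) * (y₂ : ℝ) ^ (j - k) -
              (-1 : ℝ) ^ (ℓ + 1 + (y₁ : ℤ)) * (y₁ : ℝ) ^ (j - k)) := by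
  have hne : (-1:ℝ) ≠ 0 := by norm_num
  have hjR : (j:ℝ) ≠ 0 := Nat.cast_ne_zero.mpr (by omega)
  have hof : ∀ x:ℕ, (-1:ℝ)^(ℓ + (x:ℤ)) = (-1:ℝ)^ℓ * (-1:ℝ)^x := by
    intro x; rw [zpow_add₀ hne, zpow_natCast]
  have he : ∀ y:ℕ, (-1:ℝ)^(ℓ + 1 + (y:ℤ)) = -((-1:ℝ)^ℓ * (-1:ℝ)^y) := by
    intro y; rw [zpow_add₀ hne, zpow_add₀ hne, zpow_one, zpow_natCast]; ring
  simp only [hof, he]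
  -- split RHS sum
  have hR : ∑ k ∈ Finset.Icc 2 j, ((bernoulli k : ℝ) / j) * (j.choose k) * (2 ^ k - 1) *
        (-((-1:ℝ)^ℓ * (-1:ℝ)^y₂) * (y₂ : ℝ) ^ (j - k) -
          -((-1:ℝ)^ℓ * (-1:ℝ)^y₁) * (y₁ : ℝ) ^ (j - k))
      = -((-1:ℝ)^ℓ * (-1:ℝ)^y₂) *
          ((∑ k ∈ Finset.Icc 2 j, (bernoulli k:ℝ) * (j.choose k) * (2^k-1) * (y₂:ℝ)^(j-k))/j)
        + ((-1:ℝ)^ℓ * (-1:ℝ)^y₁) *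
          ((∑ k ∈ Finset.Icc 2 j, (bernoulli k:ℝ) * (j.choose k) * (2^k-1) * (y₁:ℝ)^(j-k))/j) := by
    rw [Finset.sum_div, Finset.sum_div, Finset.mul_sum, Finset.mul_sum, ← Finset.sum_add_distrib]
    refine Finset.sum_congr rfl fun k _ => ?_
    field_simp
    ring
  -- split LHS over endpoints
  have hset : Finset.Icc y₁ y₂ = insert y₂ (insert y₁ (Finset.Ioo y₁ y₂)) := by
    ext x; simp; omega
  have hm2 : y₂ ∉ insert y₁ (Finset.Ioo y₁ y₂) := by simp; omega
  have hm1 : y₁ ∉ Finset.Ioo y₁ y₂ := by simp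
  rw [hset, Finset.sum_insert hm2, Finset.sum_insert hm1]
  rw [if_pos rfl, if_neg (by omega : ¬ y₁ = y₂), if_pos rfl]
  have hIoo : ∑ x ∈ Finset.Ioo y₁ y₂, (-1:ℝ)^ℓ * (-1:ℝ)^x * (x:ℝ)^(j-1) *
        (if x = y₂ then 1 / 2 + v * -((-1:ℝ)^ℓ * (-1:ℝ)^y₂)
         else if x = y₁ then 1 / 2 - v * -((-1:ℝ)^ℓ * (-1:ℝ)^y₁) else 1)
      = (-1:ℝ)^ℓ * ((∑ x ∈ Finset.range (y₂+1), (-1:ℝ)^x * (x:ℝ)^(j-1))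
          - (-1:ℝ)^y₂ * (y₂:ℝ)^(j-1)
          - (∑ x ∈ Finset.range (y₁+1), (-1:ℝ)^x * (x:ℝ)^(j-1))) := by
    have hconst : ∀ x ∈ Finset.Ioo y₁ y₂, (-1:ℝ)^ℓ * (-1:ℝ)^x * (x:ℝ)^(j-1) *
        (if x = y₂ then 1 / 2 + v * -((-1:ℝ)^ℓ * (-1:ℝ)^y₂)
         else if x = y₁ then 1 / 2 - v * -((-1:ℝ)^ℓ * (-1:ℝ)^y₁) else 1)
        = (-1:ℝ)^ℓ * ((-1:ℝ)^x * (x:ℝ)^(j-1)) := by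
      intro x hx
      rw [Finset.mem_Ioo] at hx
      rw [if_neg (by omega), if_neg (by omega)]
      ring
    rw [Finset.sum_congr rfl hconst, ← Finset.mul_sum]
    congr 1
    have hIs : Finset.Ioo y₁ y₂ = Finset.range y₂ \ Finset.range (y₁+1) := by
      ext x; simp; omega
    have hsub : Finset.range (y₁+1) ⊆ Finset.range y₂ := by
      intro x; simp; omega
    rw [hIs, Finset.sum_sdiff_eq_sub hsub]
    have : ∑ x ∈ Finset.range (y₂+1), (-1:ℝ)^x * (x:ℝ)^(j-1)
        = ∑ x ∈ Finset.range y₂, (-1:ℝ)^x * (x:ℝ)^(j-1) + (-1:ℝ)^y₂ * (y₂:ℝ)^(j-1) :=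
      Finset.sum_range_succ _ _
    linarith [this]
  rw [hIoo, M j hj y₂, M j hj y₁, hR]
  have hp : ((-1:ℝ)^ℓ) = 1 ∨ ((-1:ℝ)^ℓ) = -1 := by
    rcases Int.even_or_odd ℓ with hE | hO
    · left; exact hE.neg_one_zpow
    · right; exact hO.neg_one_zpow
  have hq1 : ((-1:ℝ)^y₁) = 1 ∨ ((-1:ℝ)^y₁) = -1 := by
    rcases Nat.even_or_odd y₁ with hE | hO
    · left; exact hE.neg_one_pow
    · right; exact hO.neg_one_pow
  have hq2 : ((-1:ℝ)^y₂) = 1 ∨ ((-1:ℝ)^y₂) = -1 := by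
    rcases Nat.even_or_odd y₂ with hE | hO
    · left; exact hE.neg_one_pow
    · right; exact hO.neg_one_pow
  rcases hp with hp | hp <;> rcases hq1 with hq1 | hq1 <;> rcases hq2 with hq2 | hq2 <;>
    rw [hp, hq1, hq2] <;> ring
end
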